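/- arXiv:2209.03425 — 5 statements merged into one kernel-verified Lean document; each statement's English description precedes it below -/
import Mathlib

section
/- Let ρ and ρ̃ be real-valued functionals on the set of compactly supported distributions with ρ(F) = a·Q₀(F) − b·Q₁(F) + ρ̃(F) for some constants a, b ≥ 0, where Q₀(F) = inf{x : F(x) > 0} and Q₁(F) = inf{x : F(x) ≥ 1}. If ρ̃ is quasi-convex with respect to mixtures (i.e., ρ̃(λF+(1−λ)G) ≤ max{ρ̃(F), ρ̃(G)} for all F, G and λ ∈ [0,1]), then ρ is also quasi-convex with respect to mixtures. -/
/-- A cumulative distribution function on ℝ with bounded support. -/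
def IsBddCDF (F : ℝ → ℝ) : Prop :=
  Monotone F ∧ (∀ x, 0 ≤ F x ∧ F x ≤ 1) ∧
  (∀ x, ContinuousWithinAt F (Set.Ici x) x) ∧
  (∃ a b : ℝ, a < b ∧ F a = 0 ∧ F b = 1)

/-- Essential infimum. -/
noncomputable def Q0 (F : ℝ → ℝ) : ℝ := sInf {x : ℝ | 0 < F x}

/-- Essential supremum. -/
noncomputable def Q1 (F : ℝ → ℝ) : ℝ := sInf {x : ℝ | 1 ≤ F x}

lemma mix_isBddCDF (F G : ℝ → ℝ) (hF : IsBddCDF F) (hG : IsBddCDF G) (l : ℝ)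
    (hl0 : 0 ≤ l) (hl1 : l ≤ 1) : IsBddCDF (fun x => l * F x + (1 - l) * G x) := by
  obtain ⟨hFm, hFb, hFc, aF, bF, hab, haF, hbF⟩ := hF
  obtain ⟨hGm, hGb, hGc, aG, bG, hab', haG, hbG⟩ := hG
  have hl1' : (0:ℝ) ≤ 1 - l := by linarith
  refine ⟨?_, ?_, ?_, min aF aG, max bF bG + 1, ?_, ?_, ?_⟩
  · intro x y hxy
    have h1 := mul_le_mul_of_nonneg_left (hFm hxy) hl0
    have h2 := mul_le_mul_of_nonneg_left (hGm hxy) hl1'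
    simpa using add_le_add h1 h2
  · intro x
    constructor
    · have := mul_nonneg hl0 (hFb x).1
      have := mul_nonneg hl1' (hGb x).1
      simp only; linarith
    · have h1 := mul_le_mul_of_nonneg_left (hFb x).2 hl0
      have h2 := mul_le_mul_of_nonneg_left (hGb x).2 hl1'
      simp only; linarith
  · intro x
    exact (continuousWithinAt_const.mul (hFc x)).add (continuousWithinAt_const.mul (hGc x))
  · have := min_le_left aF aG
    have := le_max_left bF bG
    linarith
  · have h1 : F (min aF aG) = 0 :=
      le_antisymm (by rw [← haF]; exact hFm (min_le_left _ _)) (hFb _).1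
    have h2 : G (min aF aG) = 0 :=
      le_antisymm (by rw [← haG]; exact hGm (min_le_right _ _)) (hGb _).1
    simp [h1, h2]
  · have h1 : F (max bF bG + 1) = 1 :=
      le_antisymm (hFb _).2 (by rw [← hbF]; exact hFm (by have := le_max_left bF bG; linarith))
    have h2 : G (max bF bG + 1) = 1 :=
      le_antisymm (hGb _).2 (by rw [← hbG]; exact hGm (by have := le_max_right bF bG; linarith))
    simp [h1, h2]

lemma Q0_mix_le (F G : ℝ → ℝ) (hF : IsBddCDF F) (hG : IsBddCDF G) (l : ℝ)
    (hl0 : 0 < l) (hl1 : l ≤ 1) : Q0 (fun x => l * F x + (1 - l) * G x) ≤ Q0 F := by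
  obtain ⟨hWm, hWb, hWc, aW, bW, habW, haW, hbW⟩ :=
    mix_isBddCDF F G hF hG l hl0.le hl1
  obtain ⟨hFm, hFb, hFc, aF, bF, hab, haF, hbF⟩ := hF
  obtain ⟨hGm, hGb, hGc, aG, bG, hab', haG, hbG⟩ := hG
  apply csInf_le_csInf
  · refine ⟨aW, fun x hx => ?_⟩
    by_contra h
    push_neg at h
    have : l * F x + (1 - l) * G x ≤ l * F aW + (1 - l) * G aW := hWm h.le
    simp only [Set.mem_setOf_eq] at hx
    have := haW
    simp only at this
    linarith
  · exact ⟨bF, by simp [Set.mem_setOf_eq, hbF]⟩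
  · intro x hx
    simp only [Set.mem_setOf_eq] at hx ⊢
    have h1 : 0 < l * F x := mul_pos hl0 hx
    have h2 : 0 ≤ (1 - l) * G x := mul_nonneg (by linarith) (hGb x).1
    linarith

lemma Q1_le_mix (F G : ℝ → ℝ) (hF : IsBddCDF F) (hG : IsBddCDF G) (l : ℝ)
    (hl0 : 0 < l) (hl1 : l ≤ 1) : Q1 F ≤ Q1 (fun x => l * F x + (1 - l) * G x) := by
  obtain ⟨hWm, hWb, hWc, aW, bW, habW, haW, hbW⟩ :=
    mix_isBddCDF F G hF hG l hl0.le hl1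
  obtain ⟨hFm, hFb, hFc, aF, bF, hab, haF, hbF⟩ := hF
  obtain ⟨hGm, hGb, hGc, aG, bG, hab', haG, hbG⟩ := hG
  apply csInf_le_csInf
  · refine ⟨aF, fun x hx => ?_⟩
    by_contra h
    push_neg at h
    have : F x ≤ F aF := hFm h.le
    simp only [Set.mem_setOf_eq] at hx
    linarith
  · exact ⟨bW, by simpa [Set.mem_setOf_eq] using hbW.ge⟩
  · intro x hx
    simp only [Set.mem_setOf_eq] at hx ⊢
    have h2 : (1 - l) * G x ≤ (1 - l) * 1 := mul_le_mul_of_nonneg_left (hGb x).2 (by linarith)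
    have h3 : l * 1 ≤ l * F x := by linarith
    have := (mul_le_mul_iff_right₀ hl0).mp h3
    linarith

/-- Adding an asymmetric spread `a·Q₀ − b·Q₁` preserves m-quasi-convexity. -/
theorem spread_preserves_mqc (ρ ρt : (ℝ → ℝ) → ℝ) (a b : ℝ) (ha : 0 ≤ a) (hb : 0 ≤ b)
    (hrep : ∀ F : ℝ → ℝ, IsBddCDF F → ρ F = a * Q0 F - b * Q1 F + ρt F)
    (hqc : ∀ F G : ℝ → ℝ, IsBddCDF F → IsBddCDF G → ∀ l ∈ Set.Icc (0 : ℝ) 1,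
      ρt (fun x => l * F x + (1 - l) * G x) ≤ max (ρt F) (ρt G)) :
    ∀ F G : ℝ → ℝ, IsBddCDF F → IsBddCDF G → ∀ l ∈ Set.Icc (0 : ℝ) 1,
      ρ (fun x => l * F x + (1 - l) * G x) ≤ max (ρ F) (ρ G) := by
  intro F G hF hG l hl
  obtain ⟨hl0, hl1⟩ := hl
  rcases eq_or_lt_of_le hl0 with h0 | h0
  · have : (fun x => l * F x + (1 - l) * G x) = G := by
      funext x; rw [← h0]; ring
    rw [this]; exact le_max_right _ _
  rcases eq_or_lt_of_le hl1 with h1 | h1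
  · have : (fun x => l * F x + (1 - l) * G x) = F := by
      funext x; rw [h1]; ring
    rw [this]; exact le_max_left _ _
  have hW : IsBddCDF (fun x => l * F x + (1 - l) * G x) := mix_isBddCDF F G hF hG l hl0 hl1
  have hrepW := hrep _ hW
  have hρt := hqc F G hF hG l ⟨hl0, hl1⟩
  have hQ0F := Q0_mix_le F G hF hG l h0 hl1
  have hQ1F := Q1_le_mix F G hF hG l h0 hl1
  have hG' : (fun x => l * F x + (1 - l) * G x) = (fun x => (1-l) * G x + (1 - (1-l)) * F x) := by
    funext x; ring
  have hQ0G : Q0 (fun x => l * F x + (1 - l) * G x) ≤ Q0 G := by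
    rw [hG']; exact Q0_mix_le G F hG hF (1 - l) (by linarith) (by linarith)
  have hQ1G : Q1 G ≤ Q1 (fun x => l * F x + (1 - l) * G x) := by
    rw [hG']; exact Q1_le_mix G F hG hF (1 - l) (by linarith) (by linarith)
  rw [hrepW, hrep F hF, hrep G hG]
  rcases le_total (ρt G) (ρt F) with hc | hc
  · have h1 : ρt (fun x => l * F x + (1 - l) * G x) ≤ ρt F := by
      simpa [max_eq_left hc] using hρt
    have h2 := mul_le_mul_of_nonneg_left hQ0F ha
    have h3 := mul_le_mul_of_nonneg_left hQ1F hb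
    exact le_max_of_le_left (by linarith)
  · have h1 : ρt (fun x => l * F x + (1 - l) * G x) ≤ ρt G := by
      simpa [max_eq_right hc] using hρt
    have h2 := mul_le_mul_of_nonneg_left hQ0G ha
    have h3 := mul_le_mul_of_nonneg_left hQ1G hb
    exact le_max_of_le_right (by linarith)
end

section
/- If h: [0,1] → ℝ is convex with h(0) = 0, then the signed Choquet integral I_h is convex with respect to mixtures on compactly supported distributions: I_h(λF + (1−λ)G) ≤ λ·I_h(F) + (1−λ)·I_h(G) for all F, G and λ ∈ [0,1]. -/
open MeasureTheory

/-- The signed Choquet integral with distortion function `h`. -/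
noncomputable def Ih (h F : ℝ → ℝ) : ℝ :=
  (∫ t in Set.Ioi (0 : ℝ), h (1 - F t)) + ∫ t in Set.Iio (0 : ℝ), (h (1 - F t) - h 1)

/-- A convex function on `[0,1]` is bounded in absolute value. -/
lemma convex_abs_bound (h : ℝ → ℝ) (hcx : ConvexOn ℝ (Set.Icc (0 : ℝ) 1) h) :
    ∀ x ∈ Set.Icc (0 : ℝ) 1, |h x| ≤ |h 0| + |h 1| + 2 * |h 2⁻¹| := by
  have h0m : (0 : ℝ) ∈ Set.Icc (0 : ℝ) 1 := ⟨le_refl 0, zero_le_one⟩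
  have h1m : (1 : ℝ) ∈ Set.Icc (0 : ℝ) 1 := ⟨zero_le_one, le_refl 1⟩
  have upper : ∀ x ∈ Set.Icc (0 : ℝ) 1, h x ≤ x * h 1 + (1 - x) * h 0 := by
    intro x hx
    have key := hcx.2 h1m h0m hx.1 (show (0:ℝ) ≤ 1 - x by linarith [hx.2])
      (show x + (1 - x) = 1 by ring)
    have harg : x • (1 : ℝ) + (1 - x) • (0 : ℝ) = x := by
      rw [smul_eq_mul, smul_eq_mul]; ring
    rw [harg, smul_eq_mul, smul_eq_mul] at key
    exact key
  intro x hx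
  have hx' : (1 - x) ∈ Set.Icc (0 : ℝ) 1 := ⟨by linarith [hx.2], by linarith [hx.1]⟩
  have hmid := hcx.2 hx hx' (show (0:ℝ) ≤ 2⁻¹ by norm_num) (show (0:ℝ) ≤ 2⁻¹ by norm_num)
    (show (2⁻¹ : ℝ) + 2⁻¹ = 1 by norm_num)
  have harg : (2⁻¹ : ℝ) • x + (2⁻¹ : ℝ) • (1 - x) = 2⁻¹ := by
    rw [smul_eq_mul, smul_eq_mul]; ring
  rw [harg, smul_eq_mul, smul_eq_mul] at hmid
  have hup := upper x hx
  have hup' := upper (1 - x) hx'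
  have e1 : h 1 ≤ |h 1| := le_abs_self _
  have e2 : -|h 1| ≤ h 1 := neg_abs_le _
  have e3 : h 0 ≤ |h 0| := le_abs_self _
  have e4 : -|h 0| ≤ h 0 := neg_abs_le _
  have e5 : -|h 2⁻¹| ≤ h 2⁻¹ := neg_abs_le _
  rw [abs_le]
  constructor
  · nlinarith [hx.1, hx.2, abs_nonneg (h 0), abs_nonneg (h 1), abs_nonneg (h 2⁻¹)]
  · nlinarith [hx.1, hx.2, abs_nonneg (h 0), abs_nonneg (h 1), abs_nonneg (h 2⁻¹)]

/-- Measurability of `t ↦ h (1 - F t)`. -/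
lemma meas_comp (h F : ℝ → ℝ) (hcx : ConvexOn ℝ (Set.Icc (0 : ℝ) 1) h)
    (hm : Monotone F) (h01 : ∀ x, 0 ≤ F x ∧ F x ≤ 1) :
    Measurable (fun t => h (1 - F t)) := by
  have hcont : ContinuousOn h (Set.Ioo (0 : ℝ) 1) := by
    have : ConvexOn ℝ (Set.Ioo (0 : ℝ) 1) h :=
      hcx.subset Set.Ioo_subset_Icc_self (convex_Ioo 0 1)
    exact this.continuousOn isOpen_Ioo
  set H : ℝ → ℝ := fun x => if x ∈ Set.Ioo (0 : ℝ) 1 then h x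
    else if x = 0 then h 0 else if x = 1 then h 1 else 0 with hHdef
  have hHmeas : Measurable H := by
    apply measurable_of_restrict_of_restrict_compl (s := Set.Ioo (0 : ℝ) 1) measurableSet_Ioo
    · have : (Set.Ioo (0 : ℝ) 1).restrict H = (Set.Ioo (0 : ℝ) 1).restrict h := by
        funext x
        show H x = h x
        simp only [hHdef, if_pos x.2]
      show Measurable ((Set.Ioo (0 : ℝ) 1).restrict H)
      rw [this]
      exact hcont.restrict.measurable
    · have hg : Measurable (fun x : ℝ => if x = 0 then h 0 else if x = 1 then h 1 else 0) :=
        Measurable.ite measurableSet_eq measurable_const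
          (Measurable.ite measurableSet_eq measurable_const measurable_const)
      have : (Set.Ioo (0 : ℝ) 1)ᶜ.restrict H
          = (Set.Ioo (0 : ℝ) 1)ᶜ.restrict
            (fun x : ℝ => if x = 0 then h 0 else if x = 1 then h 1 else 0) := by
        funext x
        show H x = (if (x : ℝ) = 0 then h 0 else if (x : ℝ) = 1 then h 1 else 0)
        simp only [hHdef, if_neg (Set.notMem_of_mem_compl x.2)]
      show Measurable ((Set.Ioo (0 : ℝ) 1)ᶜ.restrict H)
      rw [this]
      exact hg.comp measurable_subtype_coe
  have hrepr : (fun t => h (1 - F t)) = H ∘ (fun t => 1 - F t) := by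
    funext t
    have h1 := (h01 t).1
    have h2 := (h01 t).2
    simp only [Function.comp_apply, hHdef]
    by_cases hmem : 1 - F t ∈ Set.Ioo (0 : ℝ) 1
    · rw [if_pos hmem]
    · rw [if_neg hmem]
      have hor : 1 - F t = 0 ∨ 1 - F t = 1 := by
        by_contra hc
        push_neg at hc
        exact hmem ⟨lt_of_le_of_ne (by linarith) (Ne.symm hc.1),
          lt_of_le_of_ne (by linarith) hc.2⟩
      rcases hor with he | he <;> rw [he] <;> norm_num
  rw [hrepr]
  exact hHmeas.comp (measurable_const.sub hm.measurable)

/-- Integrability of a bounded measurable function vanishing outside an interval. -/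
lemma integrableOn_aux (ψ : ℝ → ℝ) (hme : Measurable ψ) (C : ℝ)
    (hC : ∀ t, |ψ t| ≤ C) (a b : ℝ) (s : Set ℝ) (hs : MeasurableSet s)
    (hz : ∀ t ∈ s, t ∉ Set.Icc a b → ψ t = 0) : IntegrableOn ψ s volume := by
  have h1 : IntegrableOn ψ (s ∩ Set.Icc a b) volume := by
    refine Measure.integrableOn_of_bounded (M := C) ?_ hme.aestronglyMeasurable ?_
    · exact ((measure_mono Set.inter_subset_right).trans_lt measure_Icc_lt_top).ne
    · exact ae_of_all _ fun t => by rw [Real.norm_eq_abs]; exact hC t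
  have h2 : IntegrableOn ψ (s \ Set.Icc a b) volume := by
    have heq : Set.EqOn ψ 0 (s \ Set.Icc a b) := fun t ht => hz t ht.1 ht.2
    exact (integrableOn_congr_fun heq (hs.diff measurableSet_Icc)).mpr
      (integrableOn_zero)
  have : s = (s ∩ Set.Icc a b) ∪ (s \ Set.Icc a b) := (Set.inter_union_diff s _).symm
  rw [this]
  exact h1.union h2

/-- If `h` is convex on `[0,1]` with `h 0 = 0`, then `I_h` is m-convex. -/
theorem Ih_mconvex_of_convex (h : ℝ → ℝ) (h0 : h 0 = 0)
    (hcx : ConvexOn ℝ (Set.Icc (0 : ℝ) 1) h)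
    (F G : ℝ → ℝ) (hF : IsBddCDF F) (hG : IsBddCDF G) (l : ℝ) (hl : l ∈ Set.Icc (0 : ℝ) 1) :
    Ih h (fun x => l * F x + (1 - l) * G x) ≤ l * Ih h F + (1 - l) * Ih h G := by
  obtain ⟨hFm, hF01, _, aF, bF, _, haF, hbF⟩ := hF
  obtain ⟨hGm, hG01, _, aG, bG, _, haG, hbG⟩ := hG
  obtain ⟨hl0, hl1⟩ := hl
  set K : ℝ → ℝ := fun x => l * F x + (1 - l) * G x with hKdef
  have hKm : Monotone K := by
    intro x y hxy
    show l * F x + (1 - l) * G x ≤ l * F y + (1 - l) * G y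
    have e1 := mul_le_mul_of_nonneg_left (hFm hxy) hl0
    have e2 := mul_le_mul_of_nonneg_left (hGm hxy) (show (0:ℝ) ≤ 1 - l by linarith)
    linarith
  have hK01 : ∀ x, 0 ≤ K x ∧ K x ≤ 1 := by
    intro x
    obtain ⟨hf1, hf2⟩ := hF01 x
    obtain ⟨hg1, hg2⟩ := hG01 x
    have e1 : 0 ≤ l * F x := mul_nonneg hl0 hf1
    have e2 : 0 ≤ (1 - l) * G x := mul_nonneg (by linarith) hg1
    have e3 : l * F x ≤ l * 1 := mul_le_mul_of_nonneg_left hf2 hl0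
    have e4 : (1 - l) * G x ≤ (1 - l) * 1 := mul_le_mul_of_nonneg_left hg2 (by linarith)
    constructor
    · show 0 ≤ l * F x + (1 - l) * G x; linarith
    · show l * F x + (1 - l) * G x ≤ 1; nlinarith
  set a : ℝ := min aF aG with hadef
  set b : ℝ := max bF bG with hbdef
  have hFb : ∀ t, b ≤ t → F t = 1 := fun t ht =>
    le_antisymm (hF01 t).2 (hbF ▸ hFm ((le_max_left _ _).trans ht))
  have hGb : ∀ t, b ≤ t → G t = 1 := fun t ht =>
    le_antisymm (hG01 t).2 (hbG ▸ hGm ((le_max_right _ _).trans ht))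
  have hFa : ∀ t, t ≤ a → F t = 0 := fun t ht =>
    le_antisymm (haF ▸ hFm (ht.trans (min_le_left _ _))) (hF01 t).1
  have hGa : ∀ t, t ≤ a → G t = 0 := fun t ht =>
    le_antisymm (haG ▸ hGm (ht.trans (min_le_right _ _))) (hG01 t).1
  have hKb : ∀ t, b ≤ t → K t = 1 := by
    intro t ht
    show l * F t + (1 - l) * G t = 1
    rw [hFb t ht, hGb t ht]; ring
  have hKa : ∀ t, t ≤ a → K t = 0 := by
    intro t ht
    show l * F t + (1 - l) * G t = 0
    rw [hFa t ht, hGa t ht]; ring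
  -- bound
  set C : ℝ := |h 0| + |h 1| + 2 * |h 2⁻¹| with hCdef
  have hbound : ∀ x ∈ Set.Icc (0:ℝ) 1, |h x| ≤ C := by
    intro x hx; rw [hCdef]; exact convex_abs_bound h hcx x hx
  have hmem : ∀ (J : ℝ → ℝ), (∀ x, 0 ≤ J x ∧ J x ≤ 1) →
      ∀ t, (1 - J t) ∈ Set.Icc (0 : ℝ) 1 := by
    intro J hJ t
    obtain ⟨hj1, hj2⟩ := hJ t
    exact ⟨by linarith, by linarith⟩
  -- integrability on Ioi 0
  have intIoi : ∀ (J : ℝ → ℝ), Monotone J → (∀ x, 0 ≤ J x ∧ J x ≤ 1) →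
      (∀ t, b ≤ t → J t = 1) →
      IntegrableOn (fun t => h (1 - J t)) (Set.Ioi (0 : ℝ)) volume := by
    intro J hJm hJ01 hJb
    refine integrableOn_aux _ (meas_comp h J hcx hJm hJ01) C
      (fun t => hbound _ (hmem J hJ01 t)) 0 b _ measurableSet_Ioi ?_
    intro t ht hnot
    rw [Set.mem_Icc] at hnot
    push_neg at hnot
    have htb : b < t := hnot (le_of_lt ht)
    rw [hJb t htb.le, sub_self, h0]
  -- integrability on Iio 0
  have intIio : ∀ (J : ℝ → ℝ), Monotone J → (∀ x, 0 ≤ J x ∧ J x ≤ 1) →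
      (∀ t, t ≤ a → J t = 0) →
      IntegrableOn (fun t => h (1 - J t) - h 1) (Set.Iio (0 : ℝ)) volume := by
    intro J hJm hJ01 hJa
    refine integrableOn_aux _ ((meas_comp h J hcx hJm hJ01).sub measurable_const)
      (C + |h 1|) ?_ a 0 _ measurableSet_Iio ?_
    · intro t
      calc |h (1 - J t) - h 1| ≤ |h (1 - J t)| + |h 1| := abs_sub _ _
        _ ≤ C + |h 1| := by
          have := hbound _ (hmem J hJ01 t)
          linarith
    · intro t ht hnot
      rw [Set.mem_Icc] at hnot
      push_neg at hnot
      have hta : t < a := by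
        by_contra hc
        push_neg at hc
        exact absurd (hnot hc) (not_lt.mpr (le_of_lt ht))
      show h (1 - J t) - h 1 = 0
      rw [hJa t hta.le, sub_zero, sub_self]
  have intF1 := intIoi F hFm hF01 (fun t ht => hFb t ht)
  have intG1 := intIoi G hGm hG01 (fun t ht => hGb t ht)
  have intK1 := intIoi K hKm hK01 (fun t ht => hKb t ht)
  have intF2 := intIio F hFm hF01 (fun t ht => hFa t ht)
  have intG2 := intIio G hGm hG01 (fun t ht => hGa t ht)
  have intK2 := intIio K hKm hK01 (fun t ht => hKa t ht)
  -- pointwise convexity inequality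
  have key : ∀ t, h (1 - K t) ≤ l * h (1 - F t) + (1 - l) * h (1 - G t) := by
    intro t
    have hmf := hmem F hF01 t
    have hmg := hmem G hG01 t
    have hk := hcx.2 hmf hmg hl0 (show (0:ℝ) ≤ 1 - l by linarith)
      (show l + (1 - l) = 1 by ring)
    have harg : l • (1 - F t) + (1 - l) • (1 - G t) = 1 - K t := by
      rw [smul_eq_mul, smul_eq_mul]
      show _ = 1 - (l * F t + (1 - l) * G t)
      ring
    rw [harg, smul_eq_mul, smul_eq_mul] at hk
    exact hk
  -- first integral inequality
  have ineq1 : (∫ t in Set.Ioi (0 : ℝ), h (1 - K t))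
      ≤ l * (∫ t in Set.Ioi (0 : ℝ), h (1 - F t))
        + (1 - l) * (∫ t in Set.Ioi (0 : ℝ), h (1 - G t)) := by
    have hsum : IntegrableOn
        (fun t => l * h (1 - F t) + (1 - l) * h (1 - G t)) (Set.Ioi (0 : ℝ)) volume :=
      (intF1.const_mul l).add (intG1.const_mul (1 - l))
    calc (∫ t in Set.Ioi (0 : ℝ), h (1 - K t))
        ≤ ∫ t in Set.Ioi (0 : ℝ), (l * h (1 - F t) + (1 - l) * h (1 - G t)) :=
          setIntegral_mono_on intK1 hsum measurableSet_Ioi (fun t _ => key t)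
      _ = l * (∫ t in Set.Ioi (0 : ℝ), h (1 - F t))
          + (1 - l) * (∫ t in Set.Ioi (0 : ℝ), h (1 - G t)) := by
          rw [integral_add (intF1.const_mul l) (intG1.const_mul (1 - l)),
            integral_const_mul, integral_const_mul]
  -- second integral inequality
  have key2 : ∀ t, h (1 - K t) - h 1
      ≤ l * (h (1 - F t) - h 1) + (1 - l) * (h (1 - G t) - h 1) := by
    intro t
    have := key t
    linarith [key t]
  have ineq2 : (∫ t in Set.Iio (0 : ℝ), (h (1 - K t) - h 1))
      ≤ l * (∫ t in Set.Iio (0 : ℝ), (h (1 - F t) - h 1))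
        + (1 - l) * (∫ t in Set.Iio (0 : ℝ), (h (1 - G t) - h 1)) := by
    have hsum : IntegrableOn
        (fun t => l * (h (1 - F t) - h 1) + (1 - l) * (h (1 - G t) - h 1))
        (Set.Iio (0 : ℝ)) volume :=
      (intF2.const_mul l).add (intG2.const_mul (1 - l))
    calc (∫ t in Set.Iio (0 : ℝ), (h (1 - K t) - h 1))
        ≤ ∫ t in Set.Iio (0 : ℝ),
            (l * (h (1 - F t) - h 1) + (1 - l) * (h (1 - G t) - h 1)) :=
          setIntegral_mono_on intK2 hsum measurableSet_Iio (fun t _ => key2 t)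
      _ = l * (∫ t in Set.Iio (0 : ℝ), (h (1 - F t) - h 1))
          + (1 - l) * (∫ t in Set.Iio (0 : ℝ), (h (1 - G t) - h 1)) := by
          rw [integral_add (intF2.const_mul l) (intG2.const_mul (1 - l)),
            integral_const_mul, integral_const_mul]
  simp only [Ih]
  have e : l * ((∫ t in Set.Ioi (0:ℝ), h (1 - F t))
        + ∫ t in Set.Iio (0:ℝ), (h (1 - F t) - h 1))
      + (1 - l) * ((∫ t in Set.Ioi (0:ℝ), h (1 - G t))
        + ∫ t in Set.Iio (0:ℝ), (h (1 - G t) - h 1))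
      = (l * (∫ t in Set.Ioi (0:ℝ), h (1 - F t))
          + (1 - l) * (∫ t in Set.Ioi (0:ℝ), h (1 - G t)))
        + (l * (∫ t in Set.Iio (0:ℝ), (h (1 - F t) - h 1))
          + (1 - l) * (∫ t in Set.Iio (0:ℝ), (h (1 - G t) - h 1))) := by ring
  linarith [ineq1, ineq2, e]
end

section
/- For any level α ∈ (0,1), the right quantile functional Q_α⁺(F) = inf{x : F(x) > α} satisfies min{Q_α⁺(F), Q_α⁺(G)} ≤ Q_α⁺(λF + (1−λ)G) ≤ max{Q_α⁺(F), Q_α⁺(G)} for all CDFs F, G with bounded support and λ ∈ [0,1]; hence Q_α⁺ is both m-quasi-convex and m-quasi-concave. -/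
/-- The right quantile at level `α`. -/
noncomputable def Qplus (α : ℝ) (F : ℝ → ℝ) : ℝ := sInf {x : ℝ | α < F x}

/-- The right quantile at a mixture lies between the min and the max of the
right quantiles; hence it is both m-quasi-convex and m-quasi-concave. -/
theorem rightQuantile_mixture (α : ℝ) (hα : α ∈ Set.Ioo (0 : ℝ) 1)
    (F G : ℝ → ℝ) (hF : IsBddCDF F) (hG : IsBddCDF G) (l : ℝ) (hl : l ∈ Set.Icc (0 : ℝ) 1) :
    min (Qplus α F) (Qplus α G) ≤ Qplus α (fun x => l * F x + (1 - l) * G x) ∧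
    Qplus α (fun x => l * F x + (1 - l) * G x) ≤ max (Qplus α F) (Qplus α G) := by
  obtain ⟨hα0, hα1⟩ := hα
  obtain ⟨hl0, hl1⟩ := hl
  obtain ⟨hFm, hFb, -, aF, bF, habF, haF, hbF⟩ := hF
  obtain ⟨hGm, hGb, -, aG, bG, habG, haG, hbG⟩ := hG
  have hbddF : BddBelow {x : ℝ | α < F x} := ⟨aF, fun x hx => by
    by_contra h
    push_neg at h
    have h1 : F x ≤ F aF := hFm h.le
    simp only [Set.mem_setOf_eq] at hx
    linarith⟩
  have hbddG : BddBelow {x : ℝ | α < G x} := ⟨aG, fun x hx => by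
    by_contra h
    push_neg at h
    have h1 : G x ≤ G aG := hGm h.le
    simp only [Set.mem_setOf_eq] at hx
    linarith⟩
  have hneF : {x : ℝ | α < F x}.Nonempty := ⟨bF, by simp [hbF, hα1]⟩
  have hneG : {x : ℝ | α < G x}.Nonempty := ⟨bG, by simp [hbG, hα1]⟩
  set c := min aF aG with hc
  have hbddH : BddBelow {x : ℝ | α < l * F x + (1 - l) * G x} := ⟨c, fun x hx => by
    by_contra h
    push_neg at h
    have h1 : F x ≤ F aF := hFm (h.le.trans (min_le_left _ _))
    have h2 : G x ≤ G aG := hGm (h.le.trans (min_le_right _ _))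
    have h3 : F x = 0 := le_antisymm (by linarith) (hFb x).1
    have h4 : G x = 0 := le_antisymm (by linarith) (hGb x).1
    simp only [Set.mem_setOf_eq, h3, h4] at hx
    linarith⟩
  have hneH : {x : ℝ | α < l * F x + (1 - l) * G x}.Nonempty := by
    refine ⟨max bF bG, ?_⟩
    have h1 : F bF ≤ F (max bF bG) := hFm (le_max_left _ _)
    have h2 : G bG ≤ G (max bF bG) := hGm (le_max_right _ _)
    have h3 : F (max bF bG) = 1 := le_antisymm (hFb _).2 (by rw [← hbF]; exact h1)
    have h4 : G (max bF bG) = 1 := le_antisymm (hGb _).2 (by rw [← hbG]; exact h2)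
    simp only [Set.mem_setOf_eq, h3, h4]
    linarith
  constructor
  · apply le_csInf hneH
    intro x hx
    simp only [Set.mem_setOf_eq] at hx
    have : α < F x ∨ α < G x := by
      by_contra h
      push_neg at h
      nlinarith [h.1, h.2]
    rcases this with h | h
    · exact (min_le_left _ _).trans (csInf_le hbddF h)
    · exact (min_le_right _ _).trans (csInf_le hbddG h)
  · apply le_of_forall_pos_le_add
    intro ε hε
    set M := max (Qplus α F) (Qplus α G) with hM
    have hFlt : Qplus α F < M + ε := lt_of_le_of_lt (le_max_left _ _) (by linarith)
    have hGlt : Qplus α G < M + ε := lt_of_le_of_lt (le_max_right _ _) (by linarith)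
    obtain ⟨y, hy, hyx⟩ := exists_lt_of_csInf_lt hneF hFlt
    obtain ⟨z, hz, hzx⟩ := exists_lt_of_csInf_lt hneG hGlt
    simp only [Set.mem_setOf_eq] at hy hz
    have h1 : F y ≤ F (M + ε) := hFm hyx.le
    have h2 : G z ≤ G (M + ε) := hGm hzx.le
    have hA : α < F (M + ε) := lt_of_lt_of_le hy h1
    have hB : α < G (M + ε) := lt_of_lt_of_le hz h2
    have hmem : M + ε ∈ {x : ℝ | α < l * F x + (1 - l) * G x} := by
      simp only [Set.mem_setOf_eq]
      rcases eq_or_lt_of_le hl0 with h | h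
      · rw [← h]; ring_nf; linarith
      · nlinarith [mul_pos h (sub_pos.mpr hA),
          mul_nonneg (sub_nonneg.mpr hl1) (sub_nonneg.mpr hB.le)]
    exact csInf_le hbddH hmem
end

section
/- Every scaled quantile-spread mixture ρ = a·Q₀ − b·Q₁ + k·(c·Q_α⁺ + (1−c)·Q_α⁻), with a, b ≥ 0, α, c ∈ [0,1], k ∈ ℝ, is quasi-convex with respect to mixtures on the set of compactly supported distributions. -/
/-- Left quantile. -/
noncomputable def Qminus (α : ℝ) (F : ℝ → ℝ) : ℝ := sInf {x : ℝ | α ≤ F x}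

/-- Mixed quantile `c·Q_α⁺ + (1−c)·Q_α⁻`, with the boundary levels `α ∈ {0,1}`
interpreted as `Q₀` resp. `Q₁`. -/
noncomputable def Qmix (α c : ℝ) (F : ℝ → ℝ) : ℝ :=
  if α = 0 then Q0 F else if α = 1 then Q1 F
  else c * Qplus α F + (1 - c) * Qminus α F

section QSM

variable {p : ℝ → Prop} {F G : ℝ → ℝ} {l α : ℝ}

lemma QSM.bddBelow (hp0 : ¬ p 0) (hF : IsBddCDF F) : BddBelow {x | p (F x)} := by
  obtain ⟨hm, hb, -, a, b, -, ha, -⟩ := hF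
  refine ⟨a, fun x hx => ?_⟩
  by_contra h
  push_neg at h
  have h1 : F x ≤ F a := hm h.le
  rw [ha] at h1
  have h2 : F x = 0 := le_antisymm h1 (hb x).1
  exact hp0 (h2 ▸ hx)

lemma QSM.nonempty (hp1 : p 1) (hF : IsBddCDF F) : Set.Nonempty {x | p (F x)} := by
  obtain ⟨-, -, -, a, b, -, -, hb⟩ := hF
  exact ⟨b, by simp only [Set.mem_setOf_eq, hb]; exact hp1⟩

lemma QSM.mem_of_lt (hp : ∀ u v, p u → u ≤ v → p v) (hp1 : p 1) (hF : IsBddCDF F)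
    {y : ℝ} (h : sInf {x | p (F x)} < y) : p (F y) := by
  obtain ⟨x, hx, hxy⟩ := exists_lt_of_csInf_lt (QSM.nonempty hp1 hF) h
  exact hp _ _ hx (hF.1 hxy.le)

lemma QSM.notMem_of_lt (hp0 : ¬ p 0) (hF : IsBddCDF F)
    {y : ℝ} (h : y < sInf {x | p (F x)}) : ¬ p (F y) := fun hy =>
  absurd (csInf_le (QSM.bddBelow hp0 hF) hy) (not_le.2 h)

lemma QSM.mix (hF : IsBddCDF F) (hG : IsBddCDF G) (hl0 : 0 ≤ l) (hl1 : l ≤ 1) :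
    IsBddCDF (fun x => l * F x + (1 - l) * G x) := by
  obtain ⟨hFm, hFb, hFc, aF, bF, habF, haF, hbF⟩ := hF
  obtain ⟨hGm, hGb, hGc, aG, bG, habG, haG, hbG⟩ := hG
  refine ⟨?_, ?_, ?_, min aF aG, max bF bG, ?_, ?_, ?_⟩
  · intro x y hxy
    have h1 := hFm hxy; have h2 := hGm hxy
    have : 0 ≤ 1 - l := by linarith
    dsimp only
    nlinarith
  · intro x
    have h1 := hFb x; have h2 := hGb x
    dsimp only
    constructor <;> nlinarith
  · intro x
    exact ((hFc x).const_mul l).add ((hGc x).const_mul (1 - l))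
  · calc min aF aG ≤ aF := min_le_left _ _
      _ < bF := habF
      _ ≤ max bF bG := le_max_left _ _
  · have h1 : F (min aF aG) ≤ F aF := hFm (min_le_left _ _)
    have h2 : G (min aF aG) ≤ G aG := hGm (min_le_right _ _)
    rw [haF] at h1; rw [haG] at h2
    have h3 := (hFb (min aF aG)).1
    have h4 := (hGb (min aF aG)).1
    have e1 : F (min aF aG) = 0 := le_antisymm h1 h3
    have e2 : G (min aF aG) = 0 := le_antisymm h2 h4
    show l * F (min aF aG) + (1 - l) * G (min aF aG) = 0
    rw [e1, e2]; ring
  · have h1 : F bF ≤ F (max bF bG) := hFm (le_max_left _ _)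
    have h2 : G bG ≤ G (max bF bG) := hGm (le_max_right _ _)
    rw [hbF] at h1; rw [hbG] at h2
    have e1 : F (max bF bG) = 1 := le_antisymm (hFb _).2 h1
    have e2 : G (max bF bG) = 1 := le_antisymm (hGb _).2 h2
    show l * F (max bF bG) + (1 - l) * G (max bF bG) = 1
    rw [e1, e2]; ring

lemma QSM.sInf_le_max (hp : ∀ u v, p u → u ≤ v → p v) (hp0 : ¬ p 0) (hp1 : p 1)
    (hF : IsBddCDF F) (hG : IsBddCDF G) (hl0 : 0 ≤ l) (hl1 : l ≤ 1) :
    sInf {x | p (l * F x + (1 - l) * G x)} ≤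
      max (sInf {x | p (F x)}) (sInf {x | p (G x)}) := by
  have hH := QSM.mix hF hG hl0 hl1
  by_contra hcon
  push_neg at hcon
  set M := max (sInf {x | p (F x)}) (sInf {x | p (G x)}) with hM
  set y := (M + sInf {x | p (l * F x + (1 - l) * G x)}) / 2 with hy
  have hy1 : M < y := by unfold y; linarith
  have hy2 : y < sInf {x | p (l * F x + (1 - l) * G x)} := by unfold y; linarith
  have hpF : p (F y) :=
    QSM.mem_of_lt hp hp1 hF (lt_of_le_of_lt (le_max_left _ _) hy1)
  have hpG : p (G y) :=
    QSM.mem_of_lt hp hp1 hG (lt_of_le_of_lt (le_max_right _ _) hy1)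
  have hmem : p (l * F y + (1 - l) * G y) := by
    rcases le_total (F y) (G y) with h | h
    · exact hp _ _ hpF (by nlinarith)
    · exact hp _ _ hpG (by nlinarith)
  exact QSM.notMem_of_lt hp0 hH hy2 hmem

lemma QSM.min_le_sInf (hp : ∀ u v, p u → u ≤ v → p v) (hp0 : ¬ p 0) (hp1 : p 1)
    (hF : IsBddCDF F) (hG : IsBddCDF G) (hl0 : 0 ≤ l) (hl1 : l ≤ 1) :
    min (sInf {x | p (F x)}) (sInf {x | p (G x)}) ≤
      sInf {x | p (l * F x + (1 - l) * G x)} := by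
  have hH := QSM.mix hF hG hl0 hl1
  refine le_csInf (QSM.nonempty hp1 hH) ?_
  intro x hx
  have hx' : p (l * F x + (1 - l) * G x) := hx
  rcases le_total (F x) (G x) with h | h
  · have hpg : p (G x) := hp _ _ hx' (by nlinarith)
    exact le_trans (min_le_right _ _) (csInf_le (QSM.bddBelow hp0 hG) hpg)
  · have hpf : p (F x) := hp _ _ hx' (by nlinarith)
    exact le_trans (min_le_left _ _) (csInf_le (QSM.bddBelow hp0 hF) hpf)

end QSM

section QSM2

variable {F G : ℝ → ℝ} {l α : ℝ}

lemma QSM.Q0_le_F (hF : IsBddCDF F) (hG : IsBddCDF G) (hl0 : 0 < l) (hl1 : l ≤ 1) :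
    Q0 (fun x => l * F x + (1 - l) * G x) ≤ Q0 F := by
  have hH := QSM.mix hF hG hl0.le hl1
  refine csInf_le_csInf (QSM.bddBelow (p := fun t => 0 < t) (by norm_num) hH)
    (QSM.nonempty (p := fun t => 0 < t) one_pos hF) ?_
  intro x hx
  have hx' : 0 < F x := hx
  have h1 := (hG.2.1 x).1
  show 0 < l * F x + (1 - l) * G x
  nlinarith

lemma QSM.Q0_le_G (hF : IsBddCDF F) (hG : IsBddCDF G) (hl0 : 0 ≤ l) (hl1 : l < 1) :
    Q0 (fun x => l * F x + (1 - l) * G x) ≤ Q0 G := by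
  have hH := QSM.mix hF hG hl0 hl1.le
  refine csInf_le_csInf (QSM.bddBelow (p := fun t => 0 < t) (by norm_num) hH)
    (QSM.nonempty (p := fun t => 0 < t) one_pos hG) ?_
  intro x hx
  have hx' : 0 < G x := hx
  have h1 := (hF.2.1 x).1
  show 0 < l * F x + (1 - l) * G x
  nlinarith

lemma QSM.Q1_ge_F (hF : IsBddCDF F) (hG : IsBddCDF G) (hl0 : 0 < l) (hl1 : l ≤ 1) :
    Q1 F ≤ Q1 (fun x => l * F x + (1 - l) * G x) := by
  have hH := QSM.mix hF hG hl0.le hl1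
  refine csInf_le_csInf (QSM.bddBelow (p := fun t => 1 ≤ t) (by norm_num) hF)
    (QSM.nonempty (p := fun t => 1 ≤ t) le_rfl hH) ?_
  intro x hx
  have hx' : 1 ≤ l * F x + (1 - l) * G x := hx
  have h1 := (hF.2.1 x).2
  have h2 := (hG.2.1 x).2
  show 1 ≤ F x
  nlinarith

lemma QSM.Q1_ge_G (hF : IsBddCDF F) (hG : IsBddCDF G) (hl0 : 0 ≤ l) (hl1 : l < 1) :
    Q1 G ≤ Q1 (fun x => l * F x + (1 - l) * G x) := by
  have hH := QSM.mix hF hG hl0 hl1.le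
  refine csInf_le_csInf (QSM.bddBelow (p := fun t => 1 ≤ t) (by norm_num) hG)
    (QSM.nonempty (p := fun t => 1 ≤ t) le_rfl hH) ?_
  intro x hx
  have hx' : 1 ≤ l * F x + (1 - l) * G x := hx
  have h1 := (hF.2.1 x).2
  have h2 := (hG.2.1 x).2
  show 1 ≤ G x
  nlinarith

lemma QSM.crossing_up (hF : IsBddCDF F) (hG : IsBddCDF G) (hl0 : 0 < l) (hl1 : l < 1)
    (hα0 : 0 < α) (hα1 : α < 1) {H : ℝ → ℝ}
    (hHd : ∀ x, H x = l * F x + (1 - l) * G x)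
    (h1 : Qminus α G < Qminus α H) (h2 : Qplus α F < Qplus α H) : False := by
  have hH : IsBddCDF H := by
    have h := QSM.mix hF hG hl0.le hl1.le
    have : H = fun x => l * F x + (1 - l) * G x := funext hHd
    rw [this]; exact h
  set y := (Qminus α G + Qminus α H) / 2 with hy
  have hy1 : Qminus α G < y := by unfold y; linarith
  have hy2 : y < Qminus α H := by unfold y; linarith
  have hGy : α ≤ G y :=
    QSM.mem_of_lt (p := fun t => α ≤ t) (fun u v hu huv => le_trans hu huv) hα1.le hG hy1
  have hHy : ¬ (α ≤ H y) :=
    QSM.notMem_of_lt (p := fun t => α ≤ t) (not_le.2 hα0) hH hy2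
  have hHy' : l * F y + (1 - l) * G y < α := by rw [← hHd y]; exact not_le.1 hHy
  have hFy : F y < α := by nlinarith
  set z := (Qplus α F + Qplus α H) / 2 with hz
  have hz1 : Qplus α F < z := by unfold z; linarith
  have hz2 : z < Qplus α H := by unfold z; linarith
  have hFz : α < F z :=
    QSM.mem_of_lt (p := fun t => α < t) (fun u v hu huv => lt_of_lt_of_le hu huv) hα1 hF hz1
  have hHz : ¬ (α < H z) :=
    QSM.notMem_of_lt (p := fun t => α < t) (not_lt.2 hα0.le) hH hz2
  have hHz' : α ≥ l * F z + (1 - l) * G z := by rw [← hHd z]; exact not_lt.1 hHz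
  have hGz : G z < α := by nlinarith
  rcases le_total y z with h | h
  · have := hG.1 h
    linarith
  · have := hF.1 h
    linarith

lemma QSM.crossing_down (hF : IsBddCDF F) (hG : IsBddCDF G) (hl0 : 0 < l) (hl1 : l < 1)
    (hα0 : 0 < α) (hα1 : α < 1) {H : ℝ → ℝ}
    (hHd : ∀ x, H x = l * F x + (1 - l) * G x)
    (h1 : Qminus α H < Qminus α G) (h2 : Qplus α H < Qplus α F) : False := by
  have hH : IsBddCDF H := by
    have h := QSM.mix hF hG hl0.le hl1.le
    have : H = fun x => l * F x + (1 - l) * G x := funext hHd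
    rw [this]; exact h
  set y := (Qminus α H + Qminus α G) / 2 with hy
  have hy1 : Qminus α H < y := by unfold y; linarith
  have hy2 : y < Qminus α G := by unfold y; linarith
  have hHy : α ≤ H y :=
    QSM.mem_of_lt (p := fun t => α ≤ t) (fun u v hu huv => le_trans hu huv) hα1.le hH hy1
  have hGy : ¬ (α ≤ G y) :=
    QSM.notMem_of_lt (p := fun t => α ≤ t) (not_le.2 hα0) hG hy2
  have hGy' : G y < α := not_le.1 hGy
  have hHy' : α ≤ l * F y + (1 - l) * G y := by rw [← hHd y]; exact hHy
  have hFy : α < F y := by nlinarith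
  set z := (Qplus α H + Qplus α F) / 2 with hz
  have hz1 : Qplus α H < z := by unfold z; linarith
  have hz2 : z < Qplus α F := by unfold z; linarith
  have hHz : α < H z :=
    QSM.mem_of_lt (p := fun t => α < t) (fun u v hu huv => lt_of_lt_of_le hu huv) hα1 hH hz1
  have hFz : ¬ (α < F z) :=
    QSM.notMem_of_lt (p := fun t => α < t) (not_lt.2 hα0.le) hF hz2
  have hFz' : F z ≤ α := not_lt.1 hFz
  have hHz' : α < l * F z + (1 - l) * G z := by rw [← hHd z]; exact hHz
  have hGz : α < G z := by nlinarith
  rcases le_total y z with h | h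
  · have := hF.1 h
    linarith
  · have := hG.1 h
    linarith

end QSM2

section QSM3

variable {F G : ℝ → ℝ} {l α : ℝ}

lemma QSM.sel_upper (hF : IsBddCDF F) (hG : IsBddCDF G) (hl0 : 0 < l) (hl1 : l < 1)
    (hα0 : 0 < α) (hα1 : α < 1) {H : ℝ → ℝ}
    (hHd : ∀ x, H x = l * F x + (1 - l) * G x) :
    (Qminus α H ≤ Qminus α F ∧ Qplus α H ≤ Qplus α F) ∨
    (Qminus α H ≤ Qminus α G ∧ Qplus α H ≤ Qplus α G) := by
  have hHeq : H = fun x => l * F x + (1 - l) * G x := funext hHd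
  have hm : Qminus α H ≤ max (Qminus α F) (Qminus α G) := by
    rw [hHeq]
    exact QSM.sInf_le_max (p := fun t => α ≤ t) (fun u v hu huv => le_trans hu huv)
      (not_le.2 hα0) hα1.le hF hG hl0.le hl1.le
  have hpm : Qplus α H ≤ max (Qplus α F) (Qplus α G) := by
    rw [hHeq]
    exact QSM.sInf_le_max (p := fun t => α < t) (fun u v hu huv => lt_of_lt_of_le hu huv)
      (not_lt.2 hα0.le) hα1 hF hG hl0.le hl1.le
  have hHd' : ∀ x, H x = (1 - l) * G x + (1 - (1 - l)) * F x := by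
    intro x; rw [hHd x]; ring
  rcases le_max_iff.mp hm with hmF | hmG
  · rcases le_or_gt (Qplus α H) (Qplus α F) with h | h
    · exact Or.inl ⟨hmF, h⟩
    · rcases le_or_gt (Qminus α H) (Qminus α G) with h' | h'
      · rcases le_max_iff.mp hpm with hpF | hpG
        · exact absurd hpF (not_le.2 h)
        · exact Or.inr ⟨h', hpG⟩
      · exact absurd (QSM.crossing_up hF hG hl0 hl1 hα0 hα1 hHd h' h) (fun f => f)
  · rcases le_or_gt (Qplus α H) (Qplus α G) with h | h
    · exact Or.inr ⟨hmG, h⟩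
    · rcases le_or_gt (Qminus α H) (Qminus α F) with h' | h'
      · rcases le_max_iff.mp hpm with hpF | hpG
        · exact Or.inl ⟨h', hpF⟩
        · exact absurd hpG (not_le.2 h)
      · exact absurd (QSM.crossing_up hG hF (by linarith) (by linarith) hα0 hα1 hHd' h' h)
          (fun f => f)

lemma QSM.sel_lower (hF : IsBddCDF F) (hG : IsBddCDF G) (hl0 : 0 < l) (hl1 : l < 1)
    (hα0 : 0 < α) (hα1 : α < 1) {H : ℝ → ℝ}
    (hHd : ∀ x, H x = l * F x + (1 - l) * G x) :
    (Qminus α F ≤ Qminus α H ∧ Qplus α F ≤ Qplus α H) ∨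
    (Qminus α G ≤ Qminus α H ∧ Qplus α G ≤ Qplus α H) := by
  have hHeq : H = fun x => l * F x + (1 - l) * G x := funext hHd
  have hm : min (Qminus α F) (Qminus α G) ≤ Qminus α H := by
    rw [hHeq]
    exact QSM.min_le_sInf (p := fun t => α ≤ t) (fun u v hu huv => le_trans hu huv)
      (not_le.2 hα0) hα1.le hF hG hl0.le hl1.le
  have hpm : min (Qplus α F) (Qplus α G) ≤ Qplus α H := by
    rw [hHeq]
    exact QSM.min_le_sInf (p := fun t => α < t) (fun u v hu huv => lt_of_lt_of_le hu huv)
      (not_lt.2 hα0.le) hα1 hF hG hl0.le hl1.le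
  have hHd' : ∀ x, H x = (1 - l) * G x + (1 - (1 - l)) * F x := by
    intro x; rw [hHd x]; ring
  rcases min_le_iff.mp hm with hmF | hmG
  · rcases le_or_gt (Qplus α F) (Qplus α H) with h | h
    · exact Or.inl ⟨hmF, h⟩
    · rcases le_or_gt (Qminus α G) (Qminus α H) with h' | h'
      · rcases min_le_iff.mp hpm with hpF | hpG
        · exact absurd hpF (not_le.2 h)
        · exact Or.inr ⟨h', hpG⟩
      · exact absurd (QSM.crossing_down hF hG hl0 hl1 hα0 hα1 hHd h' h) (fun f => f)
  · rcases le_or_gt (Qplus α G) (Qplus α H) with h | h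
    · exact Or.inr ⟨hmG, h⟩
    · rcases le_or_gt (Qminus α F) (Qminus α H) with h' | h'
      · rcases min_le_iff.mp hpm with hpF | hpG
        · exact Or.inl ⟨h', hpF⟩
        · exact absurd hpG (not_le.2 h)
      · exact absurd (QSM.crossing_down hG hF (by linarith) (by linarith) hα0 hα1 hHd' h' h)
          (fun f => f)

end QSM3

/-- Every scaled quantile-spread mixture is m-quasi-convex. -/
theorem scaled_quantile_spread_mixture_mqc (a b α c k : ℝ)
    (ha : 0 ≤ a) (hb : 0 ≤ b) (hα : α ∈ Set.Icc (0 : ℝ) 1) (hc : c ∈ Set.Icc (0 : ℝ) 1)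
    (ρ : (ℝ → ℝ) → ℝ)
    (hρ : ∀ F : ℝ → ℝ, IsBddCDF F → ρ F = a * Q0 F - b * Q1 F + k * Qmix α c F) :
    ∀ F G : ℝ → ℝ, IsBddCDF F → IsBddCDF G → ∀ l ∈ Set.Icc (0 : ℝ) 1,
      ρ (fun x => l * F x + (1 - l) * G x) ≤ max (ρ F) (ρ G) := by
  intro F G hF hG l hl
  obtain ⟨hl0, hl1⟩ := hl
  obtain ⟨hα0, hα1⟩ := hα
  obtain ⟨hc0, hc1⟩ := hc
  rcases eq_or_lt_of_le hl0 with hl0' | hl0'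
  · have hGe : (fun x => l * F x + (1 - l) * G x) = G := by
      funext x; rw [← hl0']; ring
    rw [hGe]; exact le_max_right _ _
  rcases eq_or_lt_of_le hl1 with hl1' | hl1'
  · have hFe : (fun x => l * F x + (1 - l) * G x) = F := by
      funext x; rw [hl1']; ring
    rw [hFe]; exact le_max_left _ _
  have hH : IsBddCDF (fun x => l * F x + (1 - l) * G x) := QSM.mix hF hG hl0 hl1
  rw [hρ F hF, hρ G hG, hρ _ hH]
  have h0F : Q0 (fun x => l * F x + (1 - l) * G x) ≤ Q0 F := QSM.Q0_le_F hF hG hl0' hl1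
  have h0G : Q0 (fun x => l * F x + (1 - l) * G x) ≤ Q0 G := QSM.Q0_le_G hF hG hl0 hl1'
  have h1F : Q1 F ≤ Q1 (fun x => l * F x + (1 - l) * G x) := QSM.Q1_ge_F hF hG hl0' hl1
  have h1G : Q1 G ≤ Q1 (fun x => l * F x + (1 - l) * G x) := QSM.Q1_ge_G hF hG hl0 hl1'
  have hk : k * Qmix α c (fun x => l * F x + (1 - l) * G x) ≤ k * Qmix α c F ∨
      k * Qmix α c (fun x => l * F x + (1 - l) * G x) ≤ k * Qmix α c G := by
    rcases le_or_gt 0 k with hk0 | hk0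
    · -- need Qmix H ≤ Qmix F or ≤ Qmix G
      have hsel : Qmix α c (fun x => l * F x + (1 - l) * G x) ≤ Qmix α c F ∨
          Qmix α c (fun x => l * F x + (1 - l) * G x) ≤ Qmix α c G := by
        by_cases hz : α = 0
        · left; simp only [Qmix, if_pos hz]; exact h0F
        by_cases ho : α = 1
        · simp only [Qmix, if_neg hz, if_pos ho]
          have := QSM.sInf_le_max (p := fun t => 1 ≤ t) (l := l)
            (fun u v hu huv => le_trans hu huv) (by norm_num) le_rfl hF hG hl0 hl1
          exact le_max_iff.mp this
        · have hα0' : 0 < α := lt_of_le_of_ne hα0 (Ne.symm hz)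
          have hα1' : α < 1 := lt_of_le_of_ne hα1 ho
          simp only [Qmix, if_neg hz, if_neg ho]
          rcases QSM.sel_upper hF hG hl0' hl1' hα0' hα1' (fun x => rfl) with ⟨hm, hp⟩ | ⟨hm, hp⟩
          · left
            exact add_le_add (mul_le_mul_of_nonneg_left hp hc0)
              (mul_le_mul_of_nonneg_left hm (by linarith))
          · right
            exact add_le_add (mul_le_mul_of_nonneg_left hp hc0)
              (mul_le_mul_of_nonneg_left hm (by linarith))
      rcases hsel with h | h
      · exact Or.inl (mul_le_mul_of_nonneg_left h hk0)
      · exact Or.inr (mul_le_mul_of_nonneg_left h hk0)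
    · -- k < 0 : need Qmix F ≤ Qmix H or Qmix G ≤ Qmix H
      have hsel : Qmix α c F ≤ Qmix α c (fun x => l * F x + (1 - l) * G x) ∨
          Qmix α c G ≤ Qmix α c (fun x => l * F x + (1 - l) * G x) := by
        by_cases hz : α = 0
        · simp only [Qmix, if_pos hz]
          have := QSM.min_le_sInf (p := fun t => 0 < t) (l := l)
            (fun u v hu huv => lt_of_lt_of_le hu huv) (by norm_num) one_pos hF hG hl0 hl1
          exact min_le_iff.mp this
        by_cases ho : α = 1
        · left; simp only [Qmix, if_neg hz, if_pos ho]; exact h1F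
        · have hα0' : 0 < α := lt_of_le_of_ne hα0 (Ne.symm hz)
          have hα1' : α < 1 := lt_of_le_of_ne hα1 ho
          simp only [Qmix, if_neg hz, if_neg ho]
          rcases QSM.sel_lower hF hG hl0' hl1' hα0' hα1' (fun x => rfl) with ⟨hm, hp⟩ | ⟨hm, hp⟩
          · left
            exact add_le_add (mul_le_mul_of_nonneg_left hp hc0)
              (mul_le_mul_of_nonneg_left hm (by linarith))
          · right
            exact add_le_add (mul_le_mul_of_nonneg_left hp hc0)
              (mul_le_mul_of_nonneg_left hm (by linarith))
      rcases hsel with h | h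
      · exact Or.inl (mul_le_mul_of_nonpos_left h hk0.le)
      · exact Or.inr (mul_le_mul_of_nonpos_left h hk0.le)
  rcases hk with h | h
  · refine le_trans ?_ (le_max_left _ _)
    have e1 := mul_le_mul_of_nonneg_left h0F ha
    have e2 := mul_le_mul_of_nonneg_left h1F hb
    linarith
  · refine le_trans ?_ (le_max_right _ _)
    have e1 := mul_le_mul_of_nonneg_left h0G ha
    have e2 := mul_le_mul_of_nonneg_left h1G hb
    linarith
end

section
/- Let h: [0,1] → ℝ be quasi-convex with h(0) = 0, and suppose h(1⁻) := lim_{p↑1} h(p) exists and h(1⁻) > h(1). Then h is decreasing on [0,1]. -/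
open Set Filter Topology

private lemma quasi_between (h : ℝ → ℝ)
    (hqc : ∀ p ∈ Set.Icc (0 : ℝ) 1, ∀ q ∈ Set.Icc (0 : ℝ) 1, ∀ l ∈ Set.Icc (0 : ℝ) 1,
      h (l * p + (1 - l) * q) ≤ max (h p) (h q))
    {a b c : ℝ} (ha : 0 ≤ a) (hab : a ≤ b) (hbc : b ≤ c) (hc : c ≤ 1) :
    h b ≤ max (h a) (h c) := by
  rcases eq_or_lt_of_le (hab.trans hbc) with heq | hlt
  · have hba : b = a := le_antisymm (heq ▸ hbc) hab
    simp [hba]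
  · have hca : 0 < c - a := by linarith
    set l := (c - b) / (c - a) with hl
    have hl0 : 0 ≤ l := div_nonneg (by linarith) hca.le
    have hl1 : l ≤ 1 := (div_le_one hca).mpr (by linarith)
    have heqb : l * a + (1 - l) * c = b := by
      rw [hl]; field_simp
      ring
    have := hqc a ⟨ha, by linarith⟩ c ⟨by linarith, hc⟩ l ⟨hl0, hl1⟩
    rwa [heqb] at this

/-- If `h` is quasi-convex on `[0,1]` with `h 0 = 0` and the left limit
`h(1⁻)` exists and exceeds `h 1`, then `h` is decreasing on `[0,1]`. -/
theorem decreasing_of_quasiconvex_left_limit (h : ℝ → ℝ) (h0 : h 0 = 0)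
    (hqc : ∀ p ∈ Set.Icc (0 : ℝ) 1, ∀ q ∈ Set.Icc (0 : ℝ) 1, ∀ l ∈ Set.Icc (0 : ℝ) 1,
      h (l * p + (1 - l) * q) ≤ max (h p) (h q))
    (L : ℝ) (hlim : Filter.Tendsto h (nhdsWithin 1 (Set.Ico (0 : ℝ) 1)) (nhds L))
    (hL : h 1 < L) :
    AntitoneOn h (Set.Icc (0 : ℝ) 1) := by
  have hlim' : Filter.Tendsto h (𝓝[Set.Iio (1:ℝ)] 1) (nhds L) := by
    rwa [nhdsWithin_Ico_eq_nhdsLT one_pos] at hlim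
  have hLle : ∀ z ∈ Set.Ico (0:ℝ) 1, L ≤ h z := by
    intro z hz
    have hub : ∀ᶠ p in 𝓝[Set.Iio (1:ℝ)] 1, h p ≤ max (h z) (h 1) := by
      filter_upwards [Ioo_mem_nhdsLT_of_mem ⟨hz.2, le_refl (1:ℝ)⟩] with p hp
      exact quasi_between h hqc hz.1 hp.1.le hp.2.le le_rfl
    have hle : L ≤ max (h z) (h 1) := le_of_tendsto hlim' hub
    rcases le_max_iff.mp hle with h' | h'
    · exact h'
    · linarith
  intro x hx y hy hxy
  rcases lt_or_eq_of_le hy.2 with hy1 | hy1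
  · have hub : ∀ᶠ p in 𝓝[Set.Iio (1:ℝ)] 1, h y ≤ max (h x) (h p) := by
      filter_upwards [Ioo_mem_nhdsLT_of_mem ⟨hy1, le_refl (1:ℝ)⟩] with p hp
      exact quasi_between h hqc hx.1 hxy hp.1.le hp.2.le
    have htend : Filter.Tendsto (fun p => max (h x) (h p)) (𝓝[Set.Iio (1:ℝ)] 1)
        (nhds (max (h x) L)) := tendsto_const_nhds.max hlim'
    have hyle : h y ≤ max (h x) L := ge_of_tendsto htend hub
    have hLx : L ≤ h x := hLle x ⟨hx.1, lt_of_le_of_lt hxy hy1⟩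
    calc h y ≤ max (h x) L := hyle
      _ ≤ h x := max_le le_rfl hLx
  · subst hy1
    rcases lt_or_eq_of_le hx.2 with hx1 | hx1
    · have := hLle x ⟨hx.1, hx1⟩
      linarith
    · subst hx1; exact le_rfl
end
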